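/- Let p_1,…,p_K be pairwise distinct prime numbers. Then the field extension ℚ(√p_1,…,√p_K) of ℚ generated by the positive real square roots √p_1,…,√p_K has degree exactly 2^K over ℚ. -/

import Mathlib

open Finset Submodule

/-- product of square roots of the elements of a finset of naturals -/
noncomputable def sqP (T : Finset ℕ) : ℝ := ∏ q ∈ T, Real.sqrt q

/-- the candidate vector space -/
noncomputable def VS (S : Finset ℕ) : Submodule ℚ ℝ :=
  Submodule.span ℚ (sqP '' S.powerset)

lemma sqP_empty : sqP ∅ = 1 := by simp [sqP]

lemma one_mem_VS (S : Finset ℕ) : (1 : ℝ) ∈ VS S := by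
  rw [← sqP_empty]
  exact subset_span ⟨∅, by simp, rfl⟩

lemma sqP_sq (T : Finset ℕ) : sqP T * sqP T = (∏ q ∈ T, (q : ℝ)) := by
  rw [sqP, ← Finset.prod_mul_distrib]
  exact Finset.prod_congr rfl fun q _ => Real.mul_self_sqrt (by positivity)

lemma mul_mem_VS {S : Finset ℕ} {x y : ℝ} (hx : x ∈ VS S) (hy : y ∈ VS S) :
    x * y ∈ VS S := by
  have h : VS S * VS S ≤ VS S := by
    rw [VS, Submodule.span_mul_span]
    rw [Submodule.span_le]
    rintro x hx
    rw [Set.mem_mul] at hx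
    obtain ⟨a, ha, b, hb, rfl⟩ := hx
    obtain ⟨T, hT, rfl⟩ := ha
    obtain ⟨T', hT', rfl⟩ := hb
    simp only [Finset.mem_coe, Finset.mem_powerset] at hT hT'
    -- sqP T * sqP T' = (∏ q ∈ T ∩ T', q) * sqP ((T ∪ T') \ (T ∩ T'))
    have key : sqP T * sqP T' =
        (∏ q ∈ T ∩ T', (q : ℝ)) * sqP ((T ∪ T') \ (T ∩ T')) := by
      have h1 : sqP T * sqP T' = sqP (T ∪ T') * sqP (T ∩ T') := by
        rw [sqP, sqP, sqP, sqP, Finset.prod_union_inter]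
      have h2 : sqP ((T ∪ T') \ (T ∩ T')) * sqP (T ∩ T') = sqP (T ∪ T') := by
        rw [sqP, sqP, sqP]
        exact Finset.prod_sdiff (by
          intro q hq
          simp only [Finset.mem_inter] at hq
          exact Finset.mem_union_left _ hq.1)
      rw [h1, ← h2]
      rw [show sqP ((T ∪ T') \ (T ∩ T')) * sqP (T ∩ T') * sqP (T ∩ T') =
          sqP (T ∩ T') * sqP (T ∩ T') * sqP ((T ∪ T') \ (T ∩ T')) by ring, sqP_sq]
    rw [key]
    have : ((T ∪ T') \ (T ∩ T')) ∈ S.powerset := by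
      simp only [Finset.mem_powerset]
      intro q hq
      rcases Finset.mem_union.1 (Finset.mem_sdiff.1 hq).1 with h | h
      · exact hT h
      · exact hT' h
    have hmem : sqP ((T ∪ T') \ (T ∩ T')) ∈ VS S := subset_span ⟨_, this, rfl⟩
    have : (∏ q ∈ T ∩ T', (q:ℝ)) = ((∏ q ∈ T ∩ T', (q:ℚ)) : ℚ) := by push_cast; rfl
    rw [this, ← Rat.smul_def]
    exact Submodule.smul_mem _ _ hmem
  exact h (Submodule.mul_mem_mul hx hy)

/-- `VS S` as a subalgebra -/
noncomputable def AS (S : Finset ℕ) : Subalgebra ℚ ℝ :=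
  (VS S).toSubalgebra (one_mem_VS S) (fun _ _ => mul_mem_VS)

lemma mem_AS_iff {S : Finset ℕ} {x : ℝ} : x ∈ AS S ↔ x ∈ VS S := Iff.rfl

lemma rat_mem_VS (S : Finset ℕ) (c : ℚ) : (c : ℝ) ∈ VS S := by
  have := Submodule.smul_mem (VS S) c (one_mem_VS S)
  simpa using this

lemma fd_VS (S : Finset ℕ) : FiniteDimensional ℚ (VS S) :=
  FiniteDimensional.span_of_finite ℚ ((S.powerset.finite_toSet).image _)

lemma inv_mem_VS {S : Finset ℕ} {x : ℝ} (hx : x ∈ VS S) : x⁻¹ ∈ VS S := by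
  have hfd : FiniteDimensional ℚ (VS S) := fd_VS S
  have hfg : (Subalgebra.toSubmodule (AS S)).FG := by
    have : (Subalgebra.toSubmodule (AS S)) = VS S := rfl
    rw [this, VS]
    exact Submodule.fg_span (((S.powerset).finite_toSet).image _)
  have hint : IsIntegral ℚ x := IsIntegral.of_mem_of_fg (AS S) hfg x hx
  have h2 : Algebra.adjoin ℚ {x} ≤ AS S :=
    Algebra.adjoin_le (Set.singleton_subset_iff.2 hx)
  exact h2 hint.inv_mem_adjoin

lemma VS_insert {p : ℕ} {S : Finset ℕ} (hp : p ∉ S) :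
    VS (insert p S) = VS S ⊔
      Submodule.map (LinearMap.mulLeft ℚ (Real.sqrt p)) (VS S) := by
  rw [VS, Finset.powerset_insert, Finset.coe_union, Finset.coe_image,
    Set.image_union, Submodule.span_union]
  congr 1
  rw [VS, ← Submodule.span_image]
  congr 1
  rw [Set.image_image, Set.image_image]
  apply Set.image_congr
  intro T hT
  simp only [Finset.mem_coe, Finset.mem_powerset] at hT
  have hpT : p ∉ T := fun h => hp (hT h)
  simp only [LinearMap.mulLeft_apply]
  rw [sqP, Finset.prod_insert hpT]
  rfl

lemma key : ∀ S : Finset ℕ, (∀ q ∈ S, q.Prime) → ∀ d : ℕ, Squarefree d → d ≠ 1 →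
    (∀ q ∈ S, ¬ q ∣ d) → Real.sqrt d ∉ VS S := by
  intro S
  induction S using Finset.induction_on with
  | empty =>
    intro _ d hd hd1 _ hmem
    have hirr : Irrational (Real.sqrt d) := by
      rw [irrational_sqrt_natCast_iff]
      rintro ⟨r, rfl⟩
      have hr : r = 1 := Nat.isUnit_iff.1 (hd r (dvd_refl _))
      subst hr
      exact hd1 (by norm_num)
    rw [VS] at hmem
    have : (Finset.powerset (∅ : Finset ℕ) : Set (Finset ℕ)) = {∅} := by
      simp
    rw [this, Set.image_singleton, sqP_empty, Submodule.mem_span_singleton] at hmem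
    obtain ⟨c, hc⟩ := hmem
    exact hirr ⟨c, by rw [← hc]; simp [Rat.smul_def]⟩
  | @insert p S hp IH =>
    intro hprimes d hd hd1 hcop hmem
    have hprS : ∀ q ∈ S, q.Prime := fun q hq => hprimes q (Finset.mem_insert_of_mem hq)
    have hpp : p.Prime := hprimes p (Finset.mem_insert_self p S)
    have hsp : Real.sqrt p ∉ VS S := by
      apply IH hprS p hpp.squarefree hpp.ne_one
      intro q hq hdvd
      rcases (Nat.Prime.eq_one_or_self_of_dvd hpp q hdvd) with h | h
      · exact (hprS q hq).ne_one h
      · exact hp (h ▸ hq)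
    rw [VS_insert hp, Submodule.mem_sup] at hmem
    obtain ⟨a, ha, z, hz, hsum⟩ := hmem
    obtain ⟨b, hb, rfl⟩ := hz
    simp only [LinearMap.mulLeft_apply] at hsum
    -- √d = a + √p * b
    have hd0 : (0:ℝ) ≤ (d:ℝ) := by positivity
    have hp0 : (0:ℝ) ≤ (p:ℝ) := by positivity
    have hsq : (d:ℝ) = a^2 + (p:ℝ)*b^2 + (2*a*b) * Real.sqrt p := by
      have h1 : Real.sqrt d ^ 2 = (d:ℝ) := Real.sq_sqrt hd0
      have h2 : Real.sqrt p ^ 2 = (p:ℝ) := Real.sq_sqrt hp0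
      rw [← h1, ← hsum]
      ring_nf
      nlinarith [h2]
    by_cases hab : a * b = 0
    · rcases mul_eq_zero.1 hab with h0 | h0
      · -- a = 0 : √d = √p * b, so √(p*d) = p * b ∈ VS S
        have heq : Real.sqrt (↑(p*d) : ℕ) = (p:ℝ) * b := by
          push_cast
          rw [Real.sqrt_mul hp0, ← hsum, h0, zero_add, ← mul_assoc,
            Real.mul_self_sqrt hp0]
        have hmem2 : Real.sqrt (↑(p*d)) ∈ VS S := by
          rw [heq]
          have : ((p:ℚ):ℝ) • b ∈ VS S := Submodule.smul_mem _ _ hb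
          simpa [Rat.smul_def] using this
        have hpd : Squarefree (p*d) := by
          rw [Nat.squarefree_mul_iff]
          exact ⟨(Nat.Prime.coprime_iff_not_dvd hpp).2
            (hcop p (Finset.mem_insert_self p S)), hpp.squarefree, hd⟩
        have hd0' : d ≠ 0 := hd.ne_zero
        have hpd1 : p * d ≠ 1 := by
          intro h
          exact hpp.ne_one (Nat.eq_one_of_mul_eq_one_right h)
        have hpdcop : ∀ q ∈ S, ¬ q ∣ p * d := by
          intro q hq hdvd
          rcases (Nat.Prime.dvd_mul (hprS q hq)).1 hdvd with h | h
          · rcases (Nat.prime_dvd_prime_iff_eq (hprS q hq) hpp).1 h with rfl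
            exact hp hq
          · exact hcop q (Finset.mem_insert_of_mem hq) h
        exact IH hprS (p*d) hpd hpd1 hpdcop hmem2
      · -- b = 0 : √d = a ∈ VS S
        apply IH hprS d hd hd1 (fun q hq => hcop q (Finset.mem_insert_of_mem hq))
        rw [← hsum, h0, mul_zero, add_zero]
        exact ha
    · -- √p ∈ VS S, contradiction
      apply hsp
      have h2ab : (2*a*b) ≠ 0 := by
        intro h; apply hab; nlinarith
      have : Real.sqrt p = ((d:ℝ) - a^2 - (p:ℝ)*b^2) * (2*a*b)⁻¹ := by
        rw [eq_mul_inv_iff_mul_eq₀ h2ab]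
        linarith [hsq]
      rw [this]
      have hdQ : (d:ℝ) ∈ VS S := by
        have := rat_mem_VS S (d:ℚ); simpa using this
      have ha2 : a^2 ∈ VS S := by rw [sq]; exact mul_mem_VS ha ha
      have hpb2 : (p:ℝ)*b^2 ∈ VS S := by
        rw [sq]
        have : ((p:ℚ):ℝ) • (b*b) ∈ VS S := Submodule.smul_mem _ _ (mul_mem_VS hb hb)
        simpa [Rat.smul_def, mul_assoc] using this
      have h2abm : (2*a*b) ∈ VS S := by
        have : ((2:ℚ):ℝ) • (a*b) ∈ VS S := Submodule.smul_mem _ _ (mul_mem_VS ha hb)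
        simpa [Rat.smul_def, mul_assoc] using this
      exact mul_mem_VS (Submodule.sub_mem _ (Submodule.sub_mem _ hdQ ha2) hpb2)
        (inv_mem_VS h2abm)

lemma finrank_VS : ∀ S : Finset ℕ, (∀ q ∈ S, q.Prime) →
    Module.finrank ℚ (VS S) = 2 ^ S.card := by
  intro S
  induction S using Finset.induction_on with
  | empty =>
    intro _
    have h : VS (∅ : Finset ℕ) = Submodule.span ℚ {(1:ℝ)} := by
      rw [VS]
      congr 1
      have : (Finset.powerset (∅ : Finset ℕ) : Set (Finset ℕ)) = {∅} := by simp
      rw [this, Set.image_singleton, sqP_empty]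
    rw [h, finrank_span_singleton (one_ne_zero)]
    simp
  | @insert p S hp IH =>
    intro hprimes
    have hprS : ∀ q ∈ S, q.Prime := fun q hq => hprimes q (Finset.mem_insert_of_mem hq)
    have hpp : p.Prime := hprimes p (Finset.mem_insert_self p S)
    have hsp : Real.sqrt p ∉ VS S := by
      apply key S hprS p hpp.squarefree hpp.ne_one
      intro q hq hdvd
      rcases (Nat.Prime.eq_one_or_self_of_dvd hpp q hdvd) with h | h
      · exact (hprS q hq).ne_one h
      · exact hp (h ▸ hq)
    have hsp0 : Real.sqrt p ≠ 0 := by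
      have : (0:ℝ) < Real.sqrt p := Real.sqrt_pos.2 (by exact_mod_cast hpp.pos)
      exact this.ne'
    set f := LinearMap.mulLeft ℚ (Real.sqrt p) with hf
    have hfinj : Function.Injective f := fun x y hxy => by
      simpa [hf, LinearMap.mulLeft_apply, hsp0] using
        mul_left_cancel₀ hsp0 (by simpa [hf] using hxy)
    have hW : Module.finrank ℚ (Submodule.map f (VS S)) = Module.finrank ℚ (VS S) :=
      (LinearEquiv.finrank_eq (Submodule.equivMapOfInjective f hfinj (VS S))).symm
    have hinf : VS S ⊓ Submodule.map f (VS S) = ⊥ := by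
      rw [eq_bot_iff]
      rintro x ⟨hx1, b, hb, rfl⟩
      simp only [hf, LinearMap.mulLeft_apply] at hx1 ⊢
      by_cases hb0 : b = 0
      · simp [hb0]
      · exfalso
        apply hsp
        have : Real.sqrt p = (Real.sqrt p * b) * b⁻¹ := by
          field_simp
        rw [this]
        exact mul_mem_VS hx1 (inv_mem_VS hb)
    haveI := fd_VS S
    haveI : FiniteDimensional ℚ (Submodule.map f (VS S)) := by
      rw [VS, ← Submodule.span_image]
      exact FiniteDimensional.span_of_finite ℚ
        (((S.powerset.finite_toSet).image _).image _)
    have hsum := Submodule.finrank_sup_add_finrank_inf_eq (VS S) (Submodule.map f (VS S))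
    rw [hinf, finrank_bot, add_zero, hW, IH hprS] at hsum
    rw [VS_insert hp, hsum, Finset.card_insert_of_notMem hp]
    ring

/-- For pairwise distinct primes `p 1, …, p K`, the field
`ℚ(√p 1, …, √p K)` has degree exactly `2 ^ K` over `ℚ`. -/
theorem stmt_1 (K : ℕ) (p : Fin K → ℕ) (hp : ∀ i, (p i).Prime)
    (hinj : Function.Injective p) :
    Module.finrank ℚ
      ↥(IntermediateField.adjoin ℚ (Set.range fun i => Real.sqrt (p i))) = 2 ^ K := by
  classical
  set X : Set ℝ := Set.range fun i => Real.sqrt (p i) with hX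
  set S : Finset ℕ := Finset.image p Finset.univ with hS
  have hprS : ∀ q ∈ S, q.Prime := by
    intro q hq
    obtain ⟨i, _, rfl⟩ := Finset.mem_image.1 hq
    exact hp i
  have hcard : S.card = K := by
    rw [hS, Finset.card_image_of_injective _ hinj, Finset.card_univ, Fintype.card_fin]
  have halg : ∀ x ∈ X, IsAlgebraic ℚ x := by
    rintro x ⟨i, rfl⟩
    refine ⟨Polynomial.X^2 - Polynomial.C ((p i : ℚ)),
      Polynomial.X_pow_sub_C_ne_zero (by norm_num) _, ?_⟩
    have : Real.sqrt (p i) ^ 2 = ((p i : ℕ) : ℝ) := Real.sq_sqrt (by positivity)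
    simp [this]
  have h1 : (IntermediateField.adjoin ℚ X).toSubalgebra = Algebra.adjoin ℚ X :=
    IntermediateField.adjoin_toSubalgebra_of_isAlgebraic halg
  have h2 : Algebra.adjoin ℚ X = AS S := by
    apply le_antisymm
    · rw [Algebra.adjoin_le_iff]
      rintro x ⟨i, rfl⟩
      show Real.sqrt (p i) ∈ VS S
      apply subset_span
      refine ⟨{p i}, ?_, ?_⟩
      · simp only [Finset.mem_coe, Finset.mem_powerset, Finset.singleton_subset_iff, hS]
        exact Finset.mem_image_of_mem p (Finset.mem_univ i)
      · simp [sqP]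
    · intro x hx
      have hx' : x ∈ VS S := hx
      have hle : VS S ≤ Subalgebra.toSubmodule (Algebra.adjoin ℚ X) := by
        rw [VS, Submodule.span_le]
        rintro y ⟨T, hT, rfl⟩
        simp only [Finset.mem_coe, Finset.mem_powerset] at hT
        show sqP T ∈ Algebra.adjoin ℚ X
        rw [sqP]
        apply Subalgebra.prod_mem
        intro q hq
        obtain ⟨i, _, rfl⟩ := Finset.mem_image.1 (hT hq)
        exact Algebra.subset_adjoin ⟨i, rfl⟩
      exact hle hx'
  have h3 : (IntermediateField.adjoin ℚ X).toSubalgebra = AS S := h1.trans h2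
  rw [← IntermediateField.finrank_eq_finrank_subalgebra, h3, ← hcard, ← finrank_VS S hprS]
  rfl
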